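/- Let μ be a Borel probability measure on ℝ², let Γ be a grid on ℝ² with C cells, let n ≥ 2, and let D_n be the empirical measure of n iid points drawn from μ. Call a cell of Γ large if its μ-mass exceeds 9·log₂(n)/n. Then with probability at least 1 − 2C/n³, the sum over all large cells (i,j) of |μ(cell (i,j)) − D_n(cell (i,j))| is at most 3·C·(log₂ n)^{1/2}/n^{1/2}. -/

import Mathlib

open MeasureTheory Finset
open scoped ENNReal

noncomputable section

/-- A grid with `r` rows and `c` columns on ℝ², given by `r - 1` strictly increasing
row cut points and `c - 1` strictly increasing column cut points. -/
structure Grid (r c : ℕ) where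
  rowCuts : Fin (r - 1) → ℝ
  colCuts : Fin (c - 1) → ℝ
  rowCuts_mono : StrictMono rowCuts
  colCuts_mono : StrictMono colCuts

/-- Interval number `i` of the partition of ℝ induced by the cut points `cuts`:
`[cuts (i-1), cuts i)`, with the first interval unbounded below and the last
unbounded above. -/
def cutInterval {m : ℕ} (cuts : Fin (m - 1) → ℝ) (i : Fin m) : Set ℝ :=
  {t | (∀ j : Fin (m - 1), (j : ℕ) < (i : ℕ) → cuts j ≤ t) ∧
       (∀ j : Fin (m - 1), (i : ℕ) ≤ (j : ℕ) → t < cuts j)}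

/-- Cell `(i, j)` (row `i`, column `j`) of a grid, as a subset of ℝ². -/
def Grid.cell {r c : ℕ} (G : Grid r c) (i : Fin r) (j : Fin c) : Set (ℝ × ℝ) :=
  {p | p.1 ∈ cutInterval G.colCuts j ∧ p.2 ∈ cutInterval G.rowCuts i}

/-- The probability mass function on `{1,…,r} × {1,…,c}` induced by a measure `ν`
on a grid `G`: it assigns to `(i, j)` the `ν`-measure of cell `(i, j)`. -/
def gridPMF {r c : ℕ} (ν : Measure (ℝ × ℝ)) (G : Grid r c) (i : Fin r) (j : Fin c) : ℝ :=
  (ν (G.cell i j)).toReal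

open Classical in
/-- The empirical measure of the sample `ω`, as a real-valued set function. -/
def empMeas {n : ℕ} (ω : Fin n → ℝ × ℝ) (S : Set (ℝ × ℝ)) : ℝ :=
  ((Finset.univ.filter (fun i => ω i ∈ S)).card : ℝ) / n

/-- The pmf on cells induced by the empirical measure of the sample `ω`. -/
def empGridPMF {n r c : ℕ} (ω : Fin n → ℝ × ℝ) (G : Grid r c) (i : Fin r) (j : Fin c) : ℝ :=
  empMeas ω (G.cell i j)

/-- Mutual information (base 2) of a pmf `p` on `Fin r × Fin c`, with the convention
that terms with `p i j = 0` vanish. -/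
def MI {r c : ℕ} (p : Fin r → Fin c → ℝ) : ℝ :=
  ∑ i, ∑ j, if p i j = 0 then 0
    else p i j * Real.logb 2 (p i j / ((∑ j', p i j') * (∑ i', p i' j)))


lemma measurableSet_cutInterval {m : ℕ} (cuts : Fin (m - 1) → ℝ) (i : Fin m) :
    MeasurableSet (cutInterval cuts i) := by
  have h : cutInterval cuts i =
      (⋂ j : Fin (m - 1), {t : ℝ | (j : ℕ) < (i : ℕ) → cuts j ≤ t}) ∩
      (⋂ j : Fin (m - 1), {t : ℝ | (i : ℕ) ≤ (j : ℕ) → t < cuts j}) := by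
    ext t
    simp [cutInterval, Set.mem_iInter]
  rw [h]
  refine MeasurableSet.inter (MeasurableSet.iInter fun j => ?_)
    (MeasurableSet.iInter fun j => ?_)
  · by_cases hc : (j : ℕ) < (i : ℕ)
    · have : {t : ℝ | (j : ℕ) < (i : ℕ) → cuts j ≤ t} = Set.Ici (cuts j) := by
        ext t; simp [hc]
      rw [this]; exact measurableSet_Ici
    · have : {t : ℝ | (j : ℕ) < (i : ℕ) → cuts j ≤ t} = Set.univ := by
        ext t; simp [hc]
      rw [this]; exact MeasurableSet.univ
  · by_cases hc : (i : ℕ) ≤ (j : ℕ)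
    · have : {t : ℝ | (i : ℕ) ≤ (j : ℕ) → t < cuts j} = Set.Iio (cuts j) := by
        ext t; simp [hc]
      rw [this]; exact measurableSet_Iio
    · have : {t : ℝ | (i : ℕ) ≤ (j : ℕ) → t < cuts j} = Set.univ := by
        ext t; simp [hc]
      rw [this]; exact MeasurableSet.univ

lemma empMeas_eq_sum {n : ℕ} (ω : Fin n → ℝ × ℝ) (S : Set (ℝ × ℝ)) :
    empMeas ω S = (∑ i, S.indicator (fun _ => (1:ℝ)) (ω i)) / n := by
  unfold empMeas
  congr 1
  rw [Finset.card_filter]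
  push_cast
  exact Finset.sum_congr rfl fun i _ => by by_cases h : ω i ∈ S <;> simp [h]

lemma empMeas_nonneg {n : ℕ} (ω : Fin n → ℝ × ℝ) (S : Set (ℝ × ℝ)) : 0 ≤ empMeas ω S := by
  unfold empMeas; positivity

lemma empMeas_le_one {n : ℕ} (hn : 0 < n) (ω : Fin n → ℝ × ℝ) (S : Set (ℝ × ℝ)) :
    empMeas ω S ≤ 1 := by
  rw [empMeas_eq_sum, div_le_one (by exact_mod_cast hn)]
  calc ∑ i, S.indicator (fun _ => (1:ℝ)) (ω i) ≤ ∑ _i : Fin n, (1:ℝ) :=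
        Finset.sum_le_sum fun i _ => by by_cases h : ω i ∈ S <;> simp [h]
    _ = n := by simp

lemma empMeas_compl {n : ℕ} (hn : 0 < n) (ω : Fin n → ℝ × ℝ) (S : Set (ℝ × ℝ)) :
    empMeas ω Sᶜ = 1 - empMeas ω S := by
  rw [empMeas_eq_sum, empMeas_eq_sum]
  have h : ∀ x, Sᶜ.indicator (fun _ => (1:ℝ)) x = 1 - S.indicator (fun _ => (1:ℝ)) x :=
    fun x => by by_cases h : x ∈ S <;> simp [h]
  simp_rw [h, Finset.sum_sub_distrib, Finset.sum_const, Finset.card_univ, Fintype.card_fin]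
  have hn' : (n:ℝ) ≠ 0 := by positivity
  field_simp
  simp

lemma exp_le_one_add_add_sq {x : ℝ} (h0 : 0 ≤ x) (h1 : x ≤ 1) :
    Real.exp x ≤ 1 + x + x ^ 2 := by
  have h := Real.exp_bound' h0 h1 (n := 2) (by norm_num)
  simp only [Finset.sum_range_succ, Finset.sum_range_zero] at h
  norm_num at h
  nlinarith [sq_nonneg x]

lemma chernoff (ν : Measure (ℝ × ℝ)) [IsProbabilityMeasure ν] {S : Set (ℝ × ℝ)}
    (hS : MeasurableSet S) {n : ℕ} (hn : 0 < n) {t : ℝ} (ht : 0 < t) (ht1 : t ≤ 1) :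
    (Measure.pi fun _ : Fin n => ν) {ω | (ν S).toReal + t ≤ empMeas ω S}
      ≤ ENNReal.ofReal (Real.exp (-(n * t ^ 2) / 4)) := by
  letI : MeasureSpace (ℝ × ℝ) := ⟨ν⟩
  set l : ℝ := t / 2 with hl
  have hl0 : 0 ≤ l := by positivity
  have hl1 : l ≤ 1 := by rw [hl]; linarith
  set p : ℝ := (ν S).toReal with hp
  have hp0 : 0 ≤ p := ENNReal.toReal_nonneg
  have hp1 : p ≤ 1 := by
    have h := prob_le_one (μ := ν) (s := S)
    simpa [hp] using ENNReal.toReal_mono ENNReal.one_ne_top h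
  set g : ℝ × ℝ → ℝ := fun x => 1 + S.indicator (fun _ => Real.exp l - 1) x with hg
  have hgeq : ∀ x, g x = Real.exp (l * S.indicator (fun _ => (1:ℝ)) x) := by
    intro x
    by_cases h : x ∈ S <;> simp [hg, h, Real.exp_zero]
  have hg_int : Integrable g volume :=
    (integrable_const 1).add ((integrable_const _).indicator hS)
  have hg_avg : ∫ x, g x = 1 + (Real.exp l - 1) * p := by
    rw [hg]
    rw [integral_add (integrable_const 1) ((integrable_const _).indicator hS)]
    rw [integral_indicator_const _ hS]
    have hv : (volume : Measure (ℝ × ℝ)) S = ν S := rfl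
    simp [hp, hv, mul_comm]
    exact Or.inl rfl
  set F : (Fin n → ℝ × ℝ) → ℝ := fun ω => ∏ i, g (ω i) with hF
  have hF_int : Integrable F volume := Integrable.fintype_prod (f := fun _ : Fin n => g)
    (fun _ => hg_int)
  have hF_avg : ∫ ω, F ω = (1 + (Real.exp l - 1) * p) ^ n := by
    rw [hF]
    beta_reduce
    rw [volume_pi, MeasureTheory.integral_fintype_prod_eq_pow g, hg_avg]
    simp
  have hF_nonneg : ∀ ω, 0 ≤ F ω := by
    intro ω
    refine Finset.prod_nonneg fun i _ => ?_
    rw [hgeq]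
    exact (Real.exp_pos _).le
  set ε : ℝ := Real.exp (l * (n * (p + t))) with hε
  have hεpos : 0 < ε := Real.exp_pos _
  have hsub : {ω : Fin n → ℝ × ℝ | p + t ≤ empMeas ω S} ⊆ {ω | ε ≤ F ω} := by
    intro ω hω
    simp only [Set.mem_setOf_eq] at hω ⊢
    have hsum : (n : ℝ) * (p + t) ≤ ∑ i, S.indicator (fun _ => (1:ℝ)) (ω i) := by
      rw [empMeas_eq_sum, le_div_iff₀ (by exact_mod_cast hn)] at hω
      linarith [hω]
    have hFeq : F ω = Real.exp (l * ∑ i, S.indicator (fun _ => (1:ℝ)) (ω i)) := by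
      rw [hF]
      simp only [hgeq]
      rw [← Real.exp_sum, Finset.mul_sum]
    rw [hFeq, hε]
    exact Real.exp_le_exp.2 (by nlinarith [hsum])
  have hmarkov := mul_meas_ge_le_integral_of_nonneg
    (ae_of_all _ hF_nonneg) hF_int ε
  have hmeasle : (Measure.pi fun _ : Fin n => ν) {ω | p + t ≤ empMeas ω S}
      ≤ volume {ω : Fin n → ℝ × ℝ | ε ≤ F ω} := by
    exact measure_mono hsub
  have hfin : volume {ω : Fin n → ℝ × ℝ | ε ≤ F ω} ≠ ⊤ := measure_ne_top _ _
  -- key arithmetic bound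
  have hexp : Real.exp l ≤ 1 + l + l ^ 2 := exp_le_one_add_add_sq hl0 hl1
  have hone : 1 + l ≤ Real.exp l := by have := Real.add_one_le_exp l; linarith
  have harith : (1 + (Real.exp l - 1) * p) ^ n ≤ Real.exp (-(n * t ^ 2) / 4) * ε := by
    have hbase0 : (0:ℝ) ≤ 1 + (Real.exp l - 1) * p := by nlinarith
    have hbase : 1 + (Real.exp l - 1) * p ≤ Real.exp ((Real.exp l - 1) * p) := by
      have := Real.add_one_le_exp ((Real.exp l - 1) * p)
      linarith
    calc (1 + (Real.exp l - 1) * p) ^ n ≤ Real.exp ((Real.exp l - 1) * p) ^ n :=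
          pow_le_pow_left₀ hbase0 hbase n
      _ = Real.exp ((n : ℝ) * ((Real.exp l - 1) * p)) := by
          rw [← Real.exp_nat_mul]
      _ ≤ Real.exp (-(n * t ^ 2) / 4) * ε := by
          rw [hε, ← Real.exp_add]
          refine Real.exp_le_exp.2 ?_
          have hn1 : (1:ℝ) ≤ n := by exact_mod_cast hn
          have key : (Real.exp l - 1 - l) * p ≤ t ^ 2 / 4 := by
            nlinarith
          have hinner : (Real.exp l - 1) * p - l * p - l * t + t ^ 2 / 4 ≤ 0 := by
            have hlt : l * t = t ^ 2 / 2 := by rw [hl]; ring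
            nlinarith [key]
          have hnn : (0:ℝ) ≤ (n:ℝ) := by positivity
          have hfinal := mul_le_mul_of_nonneg_left hinner hnn
          nlinarith [hfinal]
  have htoReal : (volume {ω : Fin n → ℝ × ℝ | ε ≤ F ω}).toReal
      ≤ Real.exp (-(n * t ^ 2) / 4) := by
    rw [hF_avg] at hmarkov
    calc (volume {ω : Fin n → ℝ × ℝ | ε ≤ F ω}).toReal
        ≤ (1 + (Real.exp l - 1) * p) ^ n / ε := by
          rw [le_div_iff₀ hεpos]
          exact (mul_comm _ _).trans_le hmarkov
      _ ≤ Real.exp (-(n * t ^ 2) / 4) := by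
          rw [div_le_iff₀ hεpos]
          exact harith
  refine hmeasle.trans ?_
  rw [← ENNReal.le_ofReal_iff_toReal_le hfin (Real.exp_pos _).le] at htoReal
  exact htoReal

lemma cell_tail (ν : Measure (ℝ × ℝ)) [IsProbabilityMeasure ν] {S : Set (ℝ × ℝ)}
    (hS : MeasurableSet S) {n : ℕ} (hn : 0 < n) {t : ℝ} (ht : 0 < t) (ht1 : t ≤ 1) :
    (Measure.pi fun _ : Fin n => ν) {ω | t < |(ν S).toReal - empMeas ω S|}
      ≤ 2 * ENNReal.ofReal (Real.exp (-(n * t ^ 2) / 4)) := by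
  have hp1 : (ν S).toReal ≤ 1 := by
    simpa using ENNReal.toReal_mono ENNReal.one_ne_top (prob_le_one (μ := ν) (s := S))
  have hcompl : (ν Sᶜ).toReal = 1 - (ν S).toReal := by
    rw [prob_compl_eq_one_sub hS, ENNReal.toReal_sub_of_le prob_le_one ENNReal.one_ne_top]
    simp
  have hsub : {ω : Fin n → ℝ × ℝ | t < |(ν S).toReal - empMeas ω S|} ⊆
      {ω | (ν S).toReal + t ≤ empMeas ω S} ∪ {ω | (ν Sᶜ).toReal + t ≤ empMeas ω Sᶜ} := by
    intro ω hω
    simp only [Set.mem_setOf_eq] at hω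
    rcases lt_abs.1 hω with h | h
    · right
      simp only [Set.mem_setOf_eq, hcompl, empMeas_compl hn]
      linarith
    · left
      simp only [Set.mem_setOf_eq]
      linarith
  calc (Measure.pi fun _ : Fin n => ν) {ω | t < |(ν S).toReal - empMeas ω S|}
      ≤ (Measure.pi fun _ : Fin n => ν) ({ω | (ν S).toReal + t ≤ empMeas ω S}
          ∪ {ω | (ν Sᶜ).toReal + t ≤ empMeas ω Sᶜ}) := measure_mono hsub
    _ ≤ (Measure.pi fun _ : Fin n => ν) {ω | (ν S).toReal + t ≤ empMeas ω S}
          + (Measure.pi fun _ : Fin n => ν) {ω | (ν Sᶜ).toReal + t ≤ empMeas ω Sᶜ} :=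
        measure_union_le _ _
    _ ≤ ENNReal.ofReal (Real.exp (-(n * t ^ 2) / 4))
          + ENNReal.ofReal (Real.exp (-(n * t ^ 2) / 4)) :=
        add_le_add (chernoff ν hS hn ht ht1) (chernoff ν hS.compl hn ht ht1)
    _ = 2 * ENNReal.ofReal (Real.exp (-(n * t ^ 2) / 4)) := (two_mul _).symm

lemma measurableSet_cell {r c : ℕ} (G : Grid r c) (i : Fin r) (j : Fin c) :
    MeasurableSet (G.cell i j) := by
  have h : G.cell i j = (Prod.fst ⁻¹' cutInterval G.colCuts j)
      ∩ (Prod.snd ⁻¹' cutInterval G.rowCuts i) := rfl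
  rw [h]
  exact (measurable_fst (measurableSet_cutInterval _ _)).inter
    (measurable_snd (measurableSet_cutInterval _ _))

theorem stmt11 (μ : Measure (ℝ × ℝ)) [IsProbabilityMeasure μ]
    (r c : ℕ) (Γ : Grid r c) (n : ℕ) (hn : 2 ≤ n) :
    ENNReal.ofReal (1 - 2 * ((r * c : ℕ) : ℝ) / (n : ℝ) ^ 3) ≤
      (Measure.pi fun _ : Fin n => μ)
        {ω | (∑ i, ∑ j,
            if 9 * Real.logb 2 n / n < gridPMF μ Γ i j then
              |gridPMF μ Γ i j - empGridPMF ω Γ i j| else 0) ≤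
          3 * ((r * c : ℕ) : ℝ) * Real.sqrt (Real.logb 2 n) / Real.sqrt n} := by
  have hn0 : 0 < n := lt_of_lt_of_le two_pos hn
  have hn1R : (1:ℝ) < n := by exact_mod_cast hn.trans_lt' one_lt_two
  have hnR : (0:ℝ) < n := by positivity
  set L := Real.logb 2 n with hLdef
  have hlog2 : 0 < Real.log 2 := Real.log_pos one_lt_two
  have hlogn : 0 < Real.log n := Real.log_pos hn1R
  have hL1 : 1 ≤ L := by
    rw [hLdef, Real.logb, le_div_iff₀ hlog2]
    have : Real.log 2 ≤ Real.log n := Real.log_le_log two_pos (by exact_mod_cast hn)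
    linarith
  have hL0 : 0 ≤ L := by linarith
  set t : ℝ := 3 * Real.sqrt L / Real.sqrt n with htdef
  have hsL : 0 < Real.sqrt L := Real.sqrt_pos.2 (by linarith)
  have hsn : 0 < Real.sqrt n := Real.sqrt_pos.2 hnR
  have ht0 : 0 < t := by rw [htdef]; positivity
  set E := {ω : Fin n → ℝ × ℝ | (∑ i, ∑ j,
      if 9 * L / n < gridPMF μ Γ i j then
        |gridPMF μ Γ i j - empGridPMF ω Γ i j| else 0) ≤
      3 * ((r * c : ℕ) : ℝ) * Real.sqrt L / Real.sqrt n} with hEdef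
  have hGoodSub : ∀ ω : Fin n → ℝ × ℝ,
      (∀ i j, |gridPMF μ Γ i j - empGridPMF ω Γ i j| ≤ t) → ω ∈ E := by
    intro ω h
    simp only [hEdef, Set.mem_setOf_eq]
    calc (∑ i, ∑ j, if 9 * L / n < gridPMF μ Γ i j then
            |gridPMF μ Γ i j - empGridPMF ω Γ i j| else 0)
        ≤ ∑ _i : Fin r, ∑ _j : Fin c, t := by
          refine Finset.sum_le_sum fun i _ => Finset.sum_le_sum fun j _ => ?_
          split_ifs with hc
          · exact h i j
          · exact ht0.le
      _ = (r : ℝ) * ((c : ℝ) * t) := by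
          simp [Finset.sum_const, Finset.card_univ, mul_assoc]
      _ = 3 * ((r * c : ℕ) : ℝ) * Real.sqrt L / Real.sqrt n := by
          rw [htdef]; push_cast; ring
  by_cases hcase : t ≤ 1
  · -- probabilistic case
    set Bad := ⋃ i : Fin r, ⋃ j : Fin c,
      {ω : Fin n → ℝ × ℝ | t < |(μ (Γ.cell i j)).toReal - empMeas ω (Γ.cell i j)|} with hBdef
    have hnt : (n : ℝ) * t ^ 2 = 9 * L := by
      have h9 : t ^ 2 = 9 * L / n := by
        rw [htdef, div_pow, mul_pow, Real.sq_sqrt hL0, Real.sq_sqrt hnR.le]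
        norm_num
      rw [h9]
      field_simp
    have hexp_le : Real.exp (-((n : ℝ) * t ^ 2) / 4) ≤ 1 / (n : ℝ) ^ 3 := by
      have h2 : Real.log 2 < 3 / 4 := lt_trans Real.log_two_lt_d9 (by norm_num)
      have hLeq : L * Real.log 2 = Real.log n := by
        rw [hLdef, Real.logb]
        field_simp
      have hexpo : -((n : ℝ) * t ^ 2) / 4 ≤ -(3 * Real.log n) := by
        rw [hnt]
        have hmul : L * Real.log 2 ≤ L * (3 / 4) :=
          mul_le_mul_of_nonneg_left h2.le hL0
        linarith [hLeq, hmul]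
      calc Real.exp (-((n : ℝ) * t ^ 2) / 4) ≤ Real.exp (-(3 * Real.log n)) :=
            Real.exp_le_exp.2 hexpo
        _ = 1 / (n : ℝ) ^ 3 := by
            rw [show (3:ℝ) * Real.log n = Real.log ((n:ℝ) ^ 3) by rw [Real.log_pow]; norm_num]
            rw [Real.exp_neg, Real.exp_log (by positivity)]
            rw [one_div]
    have hBad : (Measure.pi fun _ : Fin n => μ) Bad
        ≤ ENNReal.ofReal (2 * ((r * c : ℕ) : ℝ) / (n : ℝ) ^ 3) := by
      have hcell : ∀ (i : Fin r) (j : Fin c),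
          (Measure.pi fun _ : Fin n => μ)
            {ω : Fin n → ℝ × ℝ | t < |(μ (Γ.cell i j)).toReal - empMeas ω (Γ.cell i j)|}
          ≤ ENNReal.ofReal (2 / (n : ℝ) ^ 3) := by
        intro i j
        refine (cell_tail μ (measurableSet_cell Γ i j) hn0 ht0 hcase).trans ?_
        have : ENNReal.ofReal (2 / (n : ℝ) ^ 3)
            = 2 * ENNReal.ofReal (1 / (n : ℝ) ^ 3) := by
          rw [← ENNReal.ofReal_ofNat 2, ← ENNReal.ofReal_mul (by norm_num)]
          congr 1
          ring
        rw [this]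
        exact mul_le_mul_right (ENNReal.ofReal_le_ofReal hexp_le) 2
      calc (Measure.pi fun _ : Fin n => μ) Bad
          ≤ ∑' i : Fin r, (Measure.pi fun _ : Fin n => μ)
              (⋃ j : Fin c, {ω : Fin n → ℝ × ℝ |
                t < |(μ (Γ.cell i j)).toReal - empMeas ω (Γ.cell i j)|}) :=
            measure_iUnion_le _
        _ ≤ ∑' i : Fin r, ∑' j : Fin c, (Measure.pi fun _ : Fin n => μ)
              {ω : Fin n → ℝ × ℝ | t < |(μ (Γ.cell i j)).toReal - empMeas ω (Γ.cell i j)|} :=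
            ENNReal.tsum_le_tsum fun i => measure_iUnion_le _
        _ ≤ ∑' (_i : Fin r), ∑' (_j : Fin c), ENNReal.ofReal (2 / (n : ℝ) ^ 3) :=
            ENNReal.tsum_le_tsum fun i => ENNReal.tsum_le_tsum fun j => hcell i j
        _ = (r : ℝ≥0∞) * ((c : ℝ≥0∞) * ENNReal.ofReal (2 / (n : ℝ) ^ 3)) := by
            simp [tsum_fintype, Finset.sum_const, Finset.card_univ]
        _ = ENNReal.ofReal (2 * ((r * c : ℕ) : ℝ) / (n : ℝ) ^ 3) := by
            rw [← ENNReal.ofReal_natCast r, ← ENNReal.ofReal_natCast c,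
              ← ENNReal.ofReal_mul (by positivity), ← ENNReal.ofReal_mul (by positivity)]
            congr 1
            push_cast
            ring
    have hcover : (Set.univ : Set (Fin n → ℝ × ℝ)) ⊆ E ∪ Bad := by
      intro ω _
      by_cases hωb : ω ∈ Bad
      · exact Or.inr hωb
      · refine Or.inl (hGoodSub ω fun i j => ?_)
        simp only [hBdef, Set.mem_iUnion, Set.mem_setOf_eq, not_exists] at hωb
        exact not_lt.1 (hωb i j)
    have h1 : (1 : ℝ≥0∞) ≤ (Measure.pi fun _ : Fin n => μ) E
        + (Measure.pi fun _ : Fin n => μ) Bad := by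
      calc (1 : ℝ≥0∞) = (Measure.pi fun _ : Fin n => μ) Set.univ := measure_univ.symm
        _ ≤ (Measure.pi fun _ : Fin n => μ) (E ∪ Bad) := measure_mono hcover
        _ ≤ _ := measure_union_le _ _
    rw [ENNReal.ofReal_sub _ (by positivity), ENNReal.ofReal_one]
    refine tsub_le_iff_right.2 ?_
    exact h1.trans (add_le_add le_rfl hBad)
  · -- deterministic case: t > 1
    have hEuniv : ∀ ω : Fin n → ℝ × ℝ, ω ∈ E := by
      intro ω
      refine hGoodSub ω fun i j => ?_
      have hp0 : 0 ≤ gridPMF μ Γ i j := ENNReal.toReal_nonneg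
      have hp1 : gridPMF μ Γ i j ≤ 1 := by
        simpa [gridPMF] using ENNReal.toReal_mono ENNReal.one_ne_top
          (prob_le_one (μ := μ) (s := Γ.cell i j))
      have he0 : 0 ≤ empGridPMF ω Γ i j := empMeas_nonneg _ _
      have he1 : empGridPMF ω Γ i j ≤ 1 := empMeas_le_one hn0 _ _
      rw [abs_sub_le_iff]
      constructor <;> nlinarith [not_le.1 hcase]
    have hEeq : E = Set.univ := Set.eq_univ_iff_forall.2 hEuniv
    rw [hEeq, measure_univ]
    refine ENNReal.ofReal_le_one.2 ?_
    have : 0 ≤ 2 * ((r * c : ℕ) : ℝ) / (n : ℝ) ^ 3 := by positivity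
    linarith


end
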